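/- Let Σ := {x ∈ ℝ³ : x₁ = x₂ = 0} and let A ∈ C¹(ℝ³\Σ, ℝ³) be of the form A = A_τ + A_ρ + A_ζ with A_τ(x) = α(r,x₃)(−x₂,x₁,0), A_ρ(x) = β(r,x₃)(x₁,x₂,0), A_ζ(x) = γ(r,x₃)(0,0,1), where α,β,γ : (0,∞)×ℝ → ℝ are C¹ and r = √(x₁²+x₂²). Then on ℝ³\Σ one has |∇A|² = |∇A_τ|² + |∇A_ρ|² + |∇A_ζ|², and the curls satisfy the pointwise orthogonality relations (∇×A_ρ)·(∇×A_τ) = 0 and (∇×A_τ)·(∇×A_ζ) = 0. -/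

import Mathlib

open MeasureTheory Filter Topology Real

noncomputable section

abbrev V3 := EuclideanSpace ℝ (Fin 3)

/-- The axis `Σ = {x ∈ ℝ³ : x₁ = x₂ = 0}`. -/
def axisSet : Set V3 := {x | x 0 = 0 ∧ x 1 = 0}

/-- `r(x) = √(x₁² + x₂²)`. -/
def rcyl (x : V3) : ℝ := Real.sqrt ((x 0) ^ 2 + (x 1) ^ 2)

/-- The tangential direction `(−x₂, x₁, 0)`. -/
def vtau (x : V3) : V3 := (WithLp.equiv 2 (Fin 3 → ℝ)).symm ![-(x 1), x 0, 0]

/-- The radial direction `(x₁, x₂, 0)`. -/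
def vrho (x : V3) : V3 := (WithLp.equiv 2 (Fin 3 → ℝ)).symm ![x 0, x 1, 0]

/-- The vertical direction `(0, 0, 1)`. -/
def vzeta : V3 := (WithLp.equiv 2 (Fin 3 → ℝ)).symm ![0, 0, 1]

/-- The squared Frobenius norm `|∇A|²` of the Jacobian of a vector field `A`. -/
def frob2 (A : V3 → V3) (x : V3) : ℝ :=
  ∑ i : Fin 3, ∑ j : Fin 3,
    (fderiv ℝ (fun y => A y i) x (EuclideanSpace.single j 1)) ^ 2

/-- The (pointwise) curl of a vector field on `ℝ³`. -/
def curl3 (A : V3 → V3) (x : V3) : V3 :=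
  (WithLp.equiv 2 (Fin 3 → ℝ)).symm
    ![fderiv ℝ (fun y => A y 2) x (EuclideanSpace.single 1 1) -
        fderiv ℝ (fun y => A y 1) x (EuclideanSpace.single 2 1),
      fderiv ℝ (fun y => A y 0) x (EuclideanSpace.single 2 1) -
        fderiv ℝ (fun y => A y 2) x (EuclideanSpace.single 0 1),
      fderiv ℝ (fun y => A y 1) x (EuclideanSpace.single 0 1) -
        fderiv ℝ (fun y => A y 0) x (EuclideanSpace.single 1 1)]


private def auxProj (i : Fin 3) : V3 →L[ℝ] ℝ := EuclideanSpace.proj i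

private lemma auxProj_hasFDerivAt (x : V3) (i : Fin 3) :
    HasFDerivAt (fun y : V3 => y i) (auxProj i) x :=
  (auxProj i).hasFDerivAt

private lemma rcyl_hasFDerivAt (x : V3) (hx : (x 0)^2 + (x 1)^2 ≠ 0) :
    HasFDerivAt rcyl ((x 0 / rcyl x) • auxProj 0 + (x 1 / rcyl x) • auxProj 1) x := by
  have h0 := (auxProj_hasFDerivAt x 0).mul (auxProj_hasFDerivAt x 0)
  have h1 := (auxProj_hasFDerivAt x 1).mul (auxProj_hasFDerivAt x 1)
  have hq := h0.add h1
  have hq' : HasFDerivAt (fun y : V3 => (y 0)^2 + (y 1)^2)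
      ((x 0 • auxProj 0 + x 0 • auxProj 0) + (x 1 • auxProj 1 + x 1 • auxProj 1)) x := by
    exact hq.congr_of_eventuallyEq (Filter.Eventually.of_forall fun y => by
      simp only [Pi.mul_apply, Pi.add_apply]; ring)
  have hs := (Real.hasDerivAt_sqrt hx).comp_hasFDerivAt x hq'
  have hr : rcyl x ≠ 0 := by
    simp only [rcyl]
    intro h
    exact hx (by nlinarith [Real.sq_sqrt (by positivity : (0:ℝ) ≤ (x 0)^2 + (x 1)^2), h,
      Real.sqrt_nonneg ((x 0)^2 + (x 1)^2)])
  refine hs.congr_fderiv ?_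
  ext y
  simp [ContinuousLinearMap.smul_apply, auxProj, rcyl]
  ring

private lemma coeff_hasFDerivAt (g : ℝ → ℝ → ℝ)
    (hg : ContDiffOn ℝ 1 (fun p : ℝ × ℝ => g p.1 p.2) (Set.Ioi 0 ×ˢ Set.univ))
    (x : V3) (hx : ¬ (x 0 = 0 ∧ x 1 = 0)) :
    ∃ D : V3 →L[ℝ] ℝ,
      HasFDerivAt (fun y : V3 => g (rcyl y) (y 2)) D x ∧
      D (EuclideanSpace.single 0 1) * x 1 = D (EuclideanSpace.single 1 1) * x 0 := by
  have hq : (0:ℝ) < (x 0)^2 + (x 1)^2 := by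
    rcases not_and_or.1 hx with h | h <;> positivity
  have hr : 0 < rcyl x := Real.sqrt_pos.2 hq
  have hL := rcyl_hasFDerivAt x hq.ne'
  have hφ : HasFDerivAt (fun y : V3 => (rcyl y, y 2))
      (((x 0 / rcyl x) • auxProj 0 + (x 1 / rcyl x) • auxProj 1).prod (auxProj 2)) x :=
    hL.prodMk (auxProj_hasFDerivAt x 2)
  set G : ℝ × ℝ → ℝ := fun p => g p.1 p.2 with hG
  have hmem : (rcyl x, x 2) ∈ Set.Ioi (0:ℝ) ×ˢ (Set.univ : Set ℝ) := ⟨hr, trivial⟩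
  have hGd : DifferentiableAt ℝ G (rcyl x, x 2) :=
    ((hg.contDiffAt ((isOpen_Ioi.prod isOpen_univ).mem_nhds hmem)).differentiableAt one_ne_zero)
  set G' := fderiv ℝ G (rcyl x, x 2) with hG'
  have hcomp := hGd.hasFDerivAt.comp x hφ
  refine ⟨_, hcomp, ?_⟩
  have hval : ∀ a b : ℝ, G' (a, b) = a * G' (1, 0) + b * G' (0, 1) := by
    intro a b
    have h : (a, b) = a • ((1:ℝ), (0:ℝ)) + b • ((0:ℝ), (1:ℝ)) := by
      simp [Prod.ext_iff]
    rw [h, map_add, _root_.map_smul, _root_.map_smul, smul_eq_mul, smul_eq_mul]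
  simp only [ContinuousLinearMap.comp_apply, ContinuousLinearMap.prod_apply,
    ContinuousLinearMap.add_apply, ContinuousLinearMap.smul_apply]
  have hp : ∀ (i j : Fin 3), auxProj i (EuclideanSpace.single j 1) = if i = j then 1 else 0 := by
    intro i j
    simp [auxProj, EuclideanSpace.single_apply]
  rw [hp, hp, hp, hp, hp, hp]
  simp only [← hG']
  have h20 : ((2:Fin 3) = 0) = False := by decide
  have h21 : ((2:Fin 3) = 1) = False := by decide
  norm_num [h20, h21]
  rw [hval (x 0 / rcyl x) 0, hval (x 1 / rcyl x) 0]
  ring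

/-- If `A = A_τ + A_ρ + A_ζ` on `ℝ³\Σ` with cylindrical components given
by `C¹` coefficients `α, β, γ : (0,∞)×ℝ → ℝ`, then on `ℝ³\Σ` one has
`|∇A|² = |∇A_τ|² + |∇A_ρ|² + |∇A_ζ|²`, `(∇×A_ρ)·(∇×A_τ) = 0` and
`(∇×A_τ)·(∇×A_ζ) = 0`. -/
theorem stmt_13 (α β γ : ℝ → ℝ → ℝ)
    (hα : ContDiffOn ℝ 1 (fun p : ℝ × ℝ => α p.1 p.2) (Set.Ioi 0 ×ˢ Set.univ))
    (hβ : ContDiffOn ℝ 1 (fun p : ℝ × ℝ => β p.1 p.2) (Set.Ioi 0 ×ˢ Set.univ))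
    (hγ : ContDiffOn ℝ 1 (fun p : ℝ × ℝ => γ p.1 p.2) (Set.Ioi 0 ×ˢ Set.univ)) :
    ∀ x ∉ axisSet,
      frob2 (fun y => α (rcyl y) (y 2) • vtau y + β (rcyl y) (y 2) • vrho y +
          γ (rcyl y) (y 2) • vzeta) x =
        frob2 (fun y => α (rcyl y) (y 2) • vtau y) x +
          frob2 (fun y => β (rcyl y) (y 2) • vrho y) x +
          frob2 (fun y => γ (rcyl y) (y 2) • vzeta) x ∧
      (inner ℝ (curl3 (fun y => β (rcyl y) (y 2) • vrho y) x)
        (curl3 (fun y => α (rcyl y) (y 2) • vtau y) x) : ℝ) = 0 ∧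
      (inner ℝ (curl3 (fun y => α (rcyl y) (y 2) • vtau y) x)
        (curl3 (fun y => γ (rcyl y) (y 2) • vzeta) x) : ℝ) = 0 := by
  intro x hx
  have hx' : ¬ (x 0 = 0 ∧ x 1 = 0) := hx
  obtain ⟨Dα, hDα, ha⟩ := coeff_hasFDerivAt α hα x hx'
  obtain ⟨Dβ, hDβ, hb⟩ := coeff_hasFDerivAt β hβ x hx'
  obtain ⟨Dγ, hDγ, hc⟩ := coeff_hasFDerivAt γ hγ x hx'
  simp only [frob2, curl3, Fin.sum_univ_three, vtau, vrho, vzeta,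
    WithLp.equiv_symm_apply, PiLp.toLp_apply, PiLp.smul_apply, PiLp.add_apply,
    Matrix.cons_val_zero, Matrix.cons_val_one, Matrix.head_cons,
    Matrix.cons_val_two, Matrix.tail_cons, smul_eq_mul, mul_zero, mul_one,
    add_zero, zero_add, PiLp.inner_apply, RCLike.inner_apply, conj_trivial]
  have hp0 := auxProj_hasFDerivAt x 0
  have hp1 := auxProj_hasFDerivAt x 1
  have hm1n : HasFDerivAt (fun y : V3 => -y 1) (-auxProj 1) x := hp1.neg
  rw [((hDα.fun_mul hm1n).fun_add (hDβ.fun_mul hp0)).fderiv, ((hDα.fun_mul hp0).fun_add (hDβ.fun_mul hp1)).fderiv,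
    (hDα.fun_mul hm1n).fderiv, (hDα.fun_mul hp0).fderiv, (hDβ.fun_mul hp0).fderiv, (hDβ.fun_mul hp1).fderiv,
    hDγ.fderiv]
  have hpv : ∀ (i j : Fin 3), auxProj i (EuclideanSpace.single j 1) = if i = j then 1 else 0 := by
    intro i j
    simp [auxProj, EuclideanSpace.single_apply]
  have hz : fderiv ℝ (fun _ : V3 => (0:ℝ)) x = 0 := fderiv_const_apply 0
  rw [hz]
  simp only [ContinuousLinearMap.add_apply, ContinuousLinearMap.smul_apply,
    ContinuousLinearMap.neg_apply, ContinuousLinearMap.zero_apply, smul_eq_mul, hpv]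
  have d02 : ((0:Fin 3) = 2) = False := by decide
  have d12 : ((1:Fin 3) = 2) = False := by decide
  have d20 : ((2:Fin 3) = 0) = False := by decide
  have d21 : ((2:Fin 3) = 1) = False := by decide
  norm_num [d02, d12, d20, d21]
  refine ⟨?_, ?_, ?_⟩
  · linear_combination (2 * α (rcyl x) (x 2)) * hb - (2 * β (rcyl x) (x 2)) * ha
  · linear_combination (2 * α (rcyl x) (x 2) + x 0 * Dα (EuclideanSpace.single 0 1)
      + x 1 * Dα (EuclideanSpace.single 1 1)) * hb
  · linear_combination (Dα (EuclideanSpace.single 2 1)) * hc
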